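/- For every r ≥ 1, the number of ordered tuples (u₁, …, u_{2r}) of vectors of F₂^{2r} satisfying ⟨uᵢ,uⱼ⟩ₛ = Ωᵢⱼ for all 1 ≤ i, j ≤ 2r (i.e., the number of ordered symplectic bases of F₂^{2r}) equals (∏_{l=0}^{r−1} (2^{2r−2l} − 1)) · (∏_{m ∈ {1,3,5,…,2r−1}} 2^{2r−m}). -/

import Mathlib

open scoped Matrix

/-- The standard symplectic form `Ω = [[0, Iₙ],[Iₙ, 0]]` on `F₂^{2n}`,
with the `2n` coordinates indexed by `Fin n ⊕ Fin n`. -/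
def Omega (n : ℕ) : Matrix (Fin n ⊕ Fin n) (Fin n ⊕ Fin n) (ZMod 2) :=
  Matrix.fromBlocks 0 1 1 0

/-- The symplectic inner product `⟨u,v⟩ₛ = u Ω vᵀ` of row vectors `u, v ∈ F₂^{2n}`. -/
def symp {n : ℕ} (u v : (Fin n ⊕ Fin n) → ZMod 2) : ZMod 2 :=
  ∑ j : Fin n, (u (Sum.inl j) * v (Sum.inr j) + u (Sum.inr j) * v (Sum.inl j))

abbrev V (r : ℕ) := (Fin r ⊕ Fin r) → ZMod 2

lemma symp_comm {n : ℕ} (u v : (Fin n ⊕ Fin n) → ZMod 2) : symp u v = symp v u :=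
  Finset.sum_congr rfl fun i _ => by ring

lemma symp_self {n : ℕ} (u : (Fin n ⊕ Fin n) → ZMod 2) : symp u u = 0 :=
  Finset.sum_eq_zero fun i _ => by
    rw [mul_comm (u (Sum.inr i)) (u (Sum.inl i))]; exact CharTwo.add_self_eq_zero _

def sympB (r : ℕ) : LinearMap.BilinForm (ZMod 2) (V r) :=
  LinearMap.mk₂ (ZMod 2) symp
    (fun a b v => by
      simp only [symp, Pi.add_apply]
      rw [← Finset.sum_add_distrib]
      exact Finset.sum_congr rfl fun i _ => by ring)
    (fun a m v => by
      simp only [symp, Pi.smul_apply, smul_eq_mul]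
      rw [Finset.mul_sum]
      exact Finset.sum_congr rfl fun i _ => by ring)
    (fun u a b => by
      simp only [symp, Pi.add_apply]
      rw [← Finset.sum_add_distrib]
      exact Finset.sum_congr rfl fun i _ => by ring)
    (fun a u v => by
      simp only [symp, Pi.smul_apply, smul_eq_mul]
      rw [Finset.mul_sum]
      exact Finset.sum_congr rfl fun i _ => by ring)

@[simp] lemma sympB_apply {r : ℕ} (u v : V r) : sympB r u v = symp u v := rfl

lemma symp_single_inr {r : ℕ} (x : V r) (a : Fin r) :
    symp x (Pi.single (Sum.inr a) 1) = x (Sum.inl a) := by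
  simp [symp, Pi.single_apply]

lemma symp_single_inl {r : ℕ} (x : V r) (a : Fin r) :
    symp x (Pi.single (Sum.inl a) 1) = x (Sum.inr a) := by
  simp [symp, Pi.single_apply]

lemma sympB_nondeg (r : ℕ) : (sympB r).Nondegenerate := by
  constructor
  · intro x hx
    funext l
    rcases l with a | a
    · simpa [symp_single_inr] using hx (Pi.single (Sum.inr a) 1)
    · simpa [symp_single_inl] using hx (Pi.single (Sum.inl a) 1)
  · intro x hx
    funext l
    rcases l with a | a
    · simpa [symp_single_inr] using (symp_comm _ _).trans (hx (Pi.single (Sum.inr a) 1))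
    · simpa [symp_single_inl] using (symp_comm _ _).trans (hx (Pi.single (Sum.inl a) 1))

lemma exists_dual_vec {r : ℕ} {ι : Type} [Fintype ι] (v : ι → V r)
    (hv : LinearIndependent (ZMod 2) v) (c : ι → ZMod 2) :
    ∃ x : V r, ∀ i, symp x (v i) = c i := by
  classical
  let b : Module.Basis ι (ZMod 2) (Submodule.span (ZMod 2) (Set.range v)) := Module.Basis.span hv
  obtain ⟨p, hp⟩ := Submodule.exists_isCompl (Submodule.span (ZMod 2) (Set.range v))
  let pr := Submodule.linearProjOfIsCompl _ p hp
  let g : V r →ₗ[ZMod 2] ZMod 2 := (b.constr (ZMod 2) c).comp pr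
  refine ⟨((sympB r).toDual (sympB_nondeg r)).symm g, fun i => ?_⟩
  have h1 : symp (((sympB r).toDual (sympB_nondeg r)).symm g) (v i) = g (v i) :=
    LinearMap.BilinForm.apply_toDual_symm_apply (hB := sympB_nondeg r) g (v i)
  rw [h1]
  have hvmem : v i ∈ Submodule.span (ZMod 2) (Set.range v) :=
    Submodule.subset_span (Set.mem_range_self i)
  have h2 : pr (v i) = ⟨v i, hvmem⟩ :=
    Submodule.linearProjOfIsCompl_apply_left hp ⟨v i, hvmem⟩
  have h3 : (⟨v i, hvmem⟩ : Submodule.span (ZMod 2) (Set.range v)) = b i := by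
    exact (Module.Basis.span_apply hv i).symm
  show (b.constr (ZMod 2) c) (pr (v i)) = c i
  rw [h2, h3, Module.Basis.constr_basis]

lemma card_solutions {r : ℕ} {ι : Type} [Fintype ι] (v : ι → V r)
    (hv : LinearIndependent (ZMod 2) v) (c : ι → ZMod 2) :
    Nat.card {x : V r // ∀ i, symp x (v i) = c i} = 2 ^ (2 * r - Fintype.card ι) := by
  classical
  set m := Fintype.card ι with hm
  have hmle : m ≤ 2 * r := by
    have := hv.fintype_card_le_finrank
    simpa [Module.finrank_pi, two_mul] using this
  let φ : V r →ₗ[ZMod 2] (ι → ZMod 2) := LinearMap.pi fun i => (sympB r).flip (v i)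
  have hφ : ∀ x i, φ x i = symp x (v i) := fun x i => rfl
  have hsurj : Function.Surjective φ := by
    intro d
    obtain ⟨x, hx⟩ := exists_dual_vec v hv d
    exact ⟨x, funext fun i => hx i⟩
  -- the solution set is a coset of the kernel
  obtain ⟨x₀, hx₀⟩ := hsurj c
  have e2 : {x : V r // ∀ i, symp x (v i) = c i} ≃ LinearMap.ker φ :=
    { toFun := fun x => ⟨x.1 - x₀, by
        rw [LinearMap.mem_ker, map_sub, hx₀, sub_eq_zero]
        exact funext x.2⟩
      invFun := fun y => ⟨y.1 + x₀, fun i => by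
        have := LinearMap.mem_ker.mp y.2
        have : φ (y.1 + x₀) i = c i := by rw [map_add, this, hx₀]; simp
        simpa [hφ] using this⟩
      left_inv := fun x => by ext1; simp
      right_inv := fun y => by ext1; simp }
  rw [Nat.card_congr e2]
  -- cardinality of the kernel
  have hquot : Nat.card (V r ⧸ LinearMap.ker φ) = 2 ^ m := by
    rw [Nat.card_congr (φ.quotKerEquivOfSurjective hsurj).toEquiv]
    simp [Nat.card_eq_fintype_card, hm]
  have htot : Nat.card (V r) = 2 ^ (2 * r) := by
    simp [Nat.card_eq_fintype_card, two_mul]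
  have hmul : Nat.card (V r) = Nat.card (V r ⧸ LinearMap.ker φ) * Nat.card (LinearMap.ker φ) :=
    AddSubgroup.card_eq_card_quotient_mul_card_addSubgroup (LinearMap.ker φ).toAddSubgroup
  rw [htot, hquot] at hmul
  have h2 : (2:ℕ) ^ (2 * r) = 2 ^ m * 2 ^ (2 * r - m) := by
    rw [← pow_add]; congr 1; omega
  rw [h2] at hmul
  exact (Nat.eq_of_mul_eq_mul_left (by positivity) hmul.symm)

@[simp] lemma symp_zero_left {r : ℕ} (y : V r) : symp (0 : V r) y = 0 := by
  simp [symp]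

lemma omega_swap {k : ℕ} (i j : Fin k ⊕ Fin k) :
    Omega k i (j.swap) = if i = j then 1 else 0 := by
  rcases i with a | a <;> rcases j with b | b <;>
    simp [Omega, Matrix.one_apply, eq_comm]

lemma symp_sum_left {r : ℕ} {ι : Type*} (s : Finset ι) (g : ι → ZMod 2) (w : ι → V r)
    (y : V r) : symp (∑ i ∈ s, g i • w i) y = ∑ i ∈ s, g i * symp (w i) y := by
  have : symp (∑ i ∈ s, g i • w i) y = sympB r (∑ i ∈ s, g i • w i) y := rfl
  rw [this, map_sum, LinearMap.sum_apply]
  exact Finset.sum_congr rfl fun i _ => by simp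

lemma indep_of_symp {r k : ℕ} (u : Fin k ⊕ Fin k → V r)
    (hu : ∀ i j, symp (u i) (u j) = Omega k i j) :
    LinearIndependent (ZMod 2) u := by
  classical
  rw [linearIndependent_iff']
  intro s g hg j hj
  have h := congrArg (fun w => symp w (u j.swap)) hg
  rw [symp_sum_left] at h
  have : ∀ i ∈ s, g i * symp (u i) (u j.swap) = if i = j then g i else 0 := by
    intro i _
    rw [hu, omega_swap]
    split <;> simp
  rw [Finset.sum_congr rfl this, Finset.sum_ite_eq' s j] at h
  simp only [symp_zero_left] at h
  rw [if_pos hj] at h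
  exact h

lemma indep_extend {r k : ℕ} (u : Fin k ⊕ Fin k → V r)
    (hu : ∀ i j, symp (u i) (u j) = Omega k i j) (e : V r)
    (he : ∀ i, symp e (u i) = 0) (he0 : e ≠ 0) :
    LinearIndependent (ZMod 2) (Sum.elim u fun _ : Unit => e) := by
  classical
  rw [linearIndependent_iff']
  intro s g hg j hj
  -- first: all coefficients on the `inl` part vanish
  have hinl : ∀ j' : Fin k ⊕ Fin k, Sum.inl j' ∈ s → g (Sum.inl j') = 0 := by
    intro j' hj'
    have h := congrArg (fun w => symp w (u j'.swap)) hg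
    rw [symp_sum_left] at h
    have : ∀ i ∈ s, g i * symp (Sum.elim u (fun _ : Unit => e) i) (u j'.swap) =
        if i = Sum.inl j' then g i else 0 := by
      rintro (i | i) _
      · simp only [Sum.elim_inl]
        rw [hu, omega_swap]
        split
        · simp_all
        · simp_all
      · simp only [Sum.elim_inr, he]
        simp
    rw [Finset.sum_congr rfl this, Finset.sum_ite_eq' s (Sum.inl j')] at h
    simp only [symp_zero_left, if_pos hj'] at h
    exact h
  rcases j with j' | j'
  · exact hinl j' hj
  -- now the remaining term is g (inr ()) • e = 0
  have hsum : ∑ i ∈ s, g i • Sum.elim u (fun _ : Unit => e) i = g (Sum.inr j') • e := by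
    rw [Finset.sum_eq_single_of_mem (Sum.inr j') hj]
    · rfl
    rintro (b | b) hb hne
    · rw [hinl b hb, zero_smul]
    · cases j'; cases b; exact absurd rfl hne
  rw [hsum] at hg
  rcases smul_eq_zero.mp hg with h | h
  · exact h
  · exact absurd h he0

/-- Number of hyperbolic pairs `(e,f)` orthogonal to a symplectic family `u` of size `2k`. -/
lemma card_pairs {r k : ℕ} (u : Fin k ⊕ Fin k → V r)
    (hu : ∀ i j, symp (u i) (u j) = Omega k i j) :
    Nat.card {p : V r × V r // (∀ i, symp p.1 (u i) = 0) ∧ (∀ i, symp p.2 (u i) = 0) ∧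
        symp p.1 p.2 = 1}
      = (2 ^ (2 * r - 2 * k) - 1) * 2 ^ (2 * r - (2 * k + 1)) := by
  classical
  have hindep := indep_of_symp u hu
  -- split as a sigma over the first vector
  have eqv : {p : V r × V r // (∀ i, symp p.1 (u i) = 0) ∧ (∀ i, symp p.2 (u i) = 0) ∧
        symp p.1 p.2 = 1}
      ≃ Σ e : {e : V r // (∀ i, symp e (u i) = 0) ∧ e ≠ 0},
          {f : V r // (∀ i, symp f (u i) = 0) ∧ symp f e.1 = 1} :=
    { toFun := fun p => ⟨⟨p.1.1, p.2.1, by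
        intro h0
        have := p.2.2.2
        rw [h0, symp_zero_left] at this
        exact one_ne_zero this.symm⟩,
        ⟨p.1.2, p.2.2.1, by rw [symp_comm]; exact p.2.2.2⟩⟩
      invFun := fun q => ⟨(q.1.1, q.2.1), q.1.2.1, q.2.2.1, by rw [symp_comm]; exact q.2.2.2⟩
      left_inv := fun p => by ext <;> rfl
      right_inv := fun q => by rfl }
  rw [Nat.card_congr eqv]
  -- card of the fiber over each e
  have hfiber : ∀ e : {e : V r // (∀ i, symp e (u i) = 0) ∧ e ≠ 0},
      Nat.card {f : V r // (∀ i, symp f (u i) = 0) ∧ symp f e.1 = 1}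
        = 2 ^ (2 * r - (2 * k + 1)) := by
    intro e
    have hind := indep_extend u hu e.1 e.2.1 e.2.2
    have := card_solutions (Sum.elim u fun _ : Unit => e.1) hind
      (Sum.elim (fun _ => 0) fun _ => 1)
    have heqv : {x : V r // ∀ i, symp x ((Sum.elim u fun _ : Unit => e.1) i) =
          (Sum.elim (fun _ => (0 : ZMod 2)) fun _ => 1) i}
        ≃ {f : V r // (∀ i, symp f (u i) = 0) ∧ symp f e.1 = 1} := by
      apply Equiv.subtypeEquivRight
      intro x
      constructor
      · intro h
        exact ⟨fun i => h (Sum.inl i), h (Sum.inr ())⟩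
      · rintro ⟨h1, h2⟩ (i | i)
        · exact h1 i
        · exact h2
    rw [Nat.card_congr heqv.symm, this]
    congr 1
    simp only [Fintype.card_sum, Fintype.card_fin, Fintype.card_unit]
    omega
  -- card of the base: nonzero orthogonal vectors
  have hbase : Nat.card {e : V r // (∀ i, symp e (u i) = 0) ∧ e ≠ 0}
      = 2 ^ (2 * r - 2 * k) - 1 := by
    have h0 : (∀ i, symp (0 : V r) (u i) = 0) := fun i => symp_zero_left _
    have eqv2 : {e : V r // (∀ i, symp e (u i) = 0) ∧ e ≠ 0}
        ≃ {y : {e : V r // ∀ i, symp e (u i) = 0} // y ≠ ⟨0, h0⟩} :=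
      { toFun := fun e => ⟨⟨e.1, e.2.1⟩, fun hh => e.2.2 (congrArg Subtype.val hh)⟩
        invFun := fun y => ⟨y.1.1, y.1.2, fun hh => y.2 (Subtype.ext hh)⟩
        left_inv := fun e => rfl
        right_inv := fun y => rfl }
    rw [Nat.card_congr eqv2]
    have hE : Nat.card {e : V r // ∀ i, symp e (u i) = 0} = 2 ^ (2 * r - 2 * k) := by
      have := card_solutions u hindep 0
      simp only [Pi.zero_apply] at this
      rw [this]
      congr 1
      simp only [Fintype.card_sum, Fintype.card_fin]
      omega
    have : Fintype.card {y : {e : V r // ∀ i, symp e (u i) = 0} // ¬ (y = ⟨0, h0⟩)}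
        = Fintype.card {e : V r // ∀ i, symp e (u i) = 0}
          - Fintype.card {y : {e : V r // ∀ i, symp e (u i) = 0} // y = ⟨0, h0⟩} :=
      Fintype.card_subtype_compl _
    rw [Nat.card_eq_fintype_card, this, Fintype.card_subtype_eq, ← Nat.card_eq_fintype_card, hE]
  rw [Nat.card_eq_fintype_card, Fintype.card_sigma]
  calc (∑ e : {e : V r // (∀ i, symp e (u i) = 0) ∧ e ≠ 0},
        Fintype.card {f : V r // (∀ i, symp f (u i) = 0) ∧ symp f e.1 = 1})
      = ∑ e : {e : V r // (∀ i, symp e (u i) = 0) ∧ e ≠ 0}, 2 ^ (2 * r - (2 * k + 1)) := by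
        refine Finset.sum_congr rfl fun e _ => ?_
        rw [← Nat.card_eq_fintype_card, hfiber e]
    _ = (2 ^ (2 * r - 2 * k) - 1) * 2 ^ (2 * r - (2 * k + 1)) := by
        rw [Finset.sum_const, Finset.card_univ, ← Nat.card_eq_fintype_card, hbase, smul_eq_mul]

abbrev Cond {r k : ℕ} (u : Fin k ⊕ Fin k → V r) : Prop :=
  ∀ i j, symp (u i) (u j) = Omega k i j

@[simp] lemma omega_ll {n : ℕ} (a b : Fin n) : Omega n (Sum.inl a) (Sum.inl b) = 0 := rfl
@[simp] lemma omega_rr {n : ℕ} (a b : Fin n) : Omega n (Sum.inr a) (Sum.inr b) = 0 := rfl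
@[simp] lemma omega_lr {n : ℕ} (a b : Fin n) :
    Omega n (Sum.inl a) (Sum.inr b) = if a = b then 1 else 0 := by
  simp [Omega, Matrix.one_apply]
@[simp] lemma omega_rl {n : ℕ} (a b : Fin n) :
    Omega n (Sum.inr a) (Sum.inl b) = if a = b then 1 else 0 := by
  simp [Omega, Matrix.one_apply]

def emb (k : ℕ) : Fin k ⊕ Fin k → Fin (k + 1) ⊕ Fin (k + 1) :=
  Sum.map Fin.castSucc Fin.castSucc

lemma omega_emb {k : ℕ} (i j : Fin k ⊕ Fin k) :
    Omega (k + 1) (emb k i) (emb k j) = Omega k i j := by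
  rcases i with a | a <;> rcases j with b | b <;> simp [emb, Fin.castSucc_inj]

lemma omega_last_emb_l {k : ℕ} (i : Fin k ⊕ Fin k) :
    Omega (k + 1) (Sum.inl (Fin.last k)) (emb k i) = 0 := by
  rcases i with a | a <;> simp [emb, (Fin.castSucc_lt_last a).ne']

lemma omega_last_emb_r {k : ℕ} (i : Fin k ⊕ Fin k) :
    Omega (k + 1) (Sum.inr (Fin.last k)) (emb k i) = 0 := by
  rcases i with a | a <;> simp [emb, (Fin.castSucc_lt_last a).ne']

/-- Extending a symplectic family by a hyperbolic pair. -/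
def extendFam {r k : ℕ} (u₀ : Fin k ⊕ Fin k → V r) (e f : V r) :
    Fin (k + 1) ⊕ Fin (k + 1) → V r :=
  Sum.elim (fun i => Fin.lastCases e (fun j => u₀ (Sum.inl j)) i)
    (fun i => Fin.lastCases f (fun j => u₀ (Sum.inr j)) i)

lemma cond_extend {r k : ℕ} (u₀ : Fin k ⊕ Fin k → V r) (h₀ : Cond u₀) (e f : V r)
    (he : ∀ i, symp e (u₀ i) = 0) (hf : ∀ i, symp f (u₀ i) = 0) (hef : symp e f = 1) :
    Cond (extendFam u₀ e f) := by
  have hcs : ∀ a : Fin k, (Fin.last k = a.castSucc) = False := by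
    intro a
    simp [(Fin.castSucc_lt_last a).ne']
  have hcs' : ∀ a : Fin k, (a.castSucc = Fin.last k) = False := by
    intro a
    simp [(Fin.castSucc_lt_last a).ne]
  rintro (i | i) (j | j) <;>
    [skip; skip; skip; skip] <;>
    induction i using Fin.lastCases with
  | last =>
    induction j using Fin.lastCases with
    | last =>
      simp only [extendFam, Sum.elim_inl, Sum.elim_inr, Fin.lastCases_last]
      first
        | (simp [symp_self]; done)
        | (simp [hef]; done)
        | (rw [symp_comm, hef]; simp; done)
    | cast j =>
      simp only [extendFam, Sum.elim_inl, Sum.elim_inr, Fin.lastCases_last,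
        Fin.lastCases_castSucc]
      first
        | (simp [he (Sum.inl j), hcs]; done)
        | (simp [he (Sum.inr j), hcs]; done)
        | (simp [hf (Sum.inl j), hcs]; done)
        | (simp [hf (Sum.inr j), hcs]; done)
  | cast i =>
    induction j using Fin.lastCases with
    | last =>
      simp only [extendFam, Sum.elim_inl, Sum.elim_inr, Fin.lastCases_last,
        Fin.lastCases_castSucc]
      rw [symp_comm]
      first
        | (simp [he (Sum.inl i), hcs']; done)
        | (simp [he (Sum.inr i), hcs']; done)
        | (simp [hf (Sum.inl i), hcs']; done)
        | (simp [hf (Sum.inr i), hcs']; done)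
        | (rw [hef]; simp [hcs']; done)
    | cast j =>
      simp only [extendFam, Sum.elim_inl, Sum.elim_inr, Fin.lastCases_castSucc]
      rw [h₀]
      simp [Fin.castSucc_inj]

def stepEquiv (r k : ℕ) :
    {u : Fin (k+1) ⊕ Fin (k+1) → V r // Cond u} ≃
      Σ u : {u : Fin k ⊕ Fin k → V r // Cond u},
        {p : V r × V r // (∀ i, symp p.1 (u.1 i) = 0) ∧ (∀ i, symp p.2 (u.1 i) = 0) ∧
          symp p.1 p.2 = 1} where
  toFun u := ⟨⟨u.1 ∘ emb k, fun i j => by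
      rw [Function.comp_apply, Function.comp_apply, u.2, omega_emb]⟩,
    ⟨(u.1 (Sum.inl (Fin.last k)), u.1 (Sum.inr (Fin.last k))),
      fun i => by
        show symp (u.1 (Sum.inl (Fin.last k))) (u.1 (emb k i)) = 0
        rw [u.2, omega_last_emb_l],
      fun i => by
        show symp (u.1 (Sum.inr (Fin.last k))) (u.1 (emb k i)) = 0
        rw [u.2, omega_last_emb_r],
      by
        show symp (u.1 (Sum.inl (Fin.last k))) (u.1 (Sum.inr (Fin.last k))) = 1
        rw [u.2]; simp⟩⟩
  invFun q :=
    ⟨extendFam q.1.1 q.2.1.1 q.2.1.2,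
      cond_extend q.1.1 q.1.2 q.2.1.1 q.2.1.2 q.2.2.1 q.2.2.2.1 q.2.2.2.2⟩
  left_inv u := by
    apply Subtype.ext
    funext i
    rcases i with i | i <;>
      induction i using Fin.lastCases with
      | last => simp [extendFam]
      | cast i => simp [extendFam, emb]
  right_inv q := by
    obtain ⟨⟨u₀, h₀⟩, ⟨⟨e, f⟩, he, hf, hef⟩⟩ := q
    have key : ∀ (X Y : {u : Fin k ⊕ Fin k → V r // Cond u}) (_ : X = Y)
        (B' : {p : V r × V r // (∀ i, symp p.1 (X.1 i) = 0) ∧ (∀ i, symp p.2 (X.1 i) = 0) ∧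
          symp p.1 p.2 = 1})
        (B : {p : V r × V r // (∀ i, symp p.1 (Y.1 i) = 0) ∧ (∀ i, symp p.2 (Y.1 i) = 0) ∧
          symp p.1 p.2 = 1}), B'.1 = B.1 → HEq B' B := by
      rintro X Y rfl B' B h
      exact heq_of_eq (Subtype.ext h)
    have h1 : (⟨(extendFam u₀ e f) ∘ emb k, fun i j => by
        rw [Function.comp_apply, Function.comp_apply, cond_extend u₀ h₀ e f he hf hef,
          omega_emb]⟩ : {u : Fin k ⊕ Fin k → V r // Cond u}) = ⟨u₀, h₀⟩ := by
      apply Subtype.ext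
      funext i
      rcases i with i | i <;> simp [extendFam, emb]
    exact Sigma.ext h1 (key _ _ h1 _ _ (by simp [extendFam]))

lemma key (r : ℕ) : ∀ k : ℕ,
    Nat.card {u : Fin k ⊕ Fin k → V r // Cond u}
      = ∏ l ∈ Finset.range k, ((2 ^ (2 * r - 2 * l) - 1) * 2 ^ (2 * r - (2 * l + 1))) := by
  intro k
  classical
  induction k with
  | zero =>
    rw [Finset.range_zero, Finset.prod_empty]
    have : ∀ u : Fin 0 ⊕ Fin 0 → V r, Cond u := by
      rintro u (i | i) <;> exact absurd i.2 (by omega)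
    rw [Nat.card_eq_fintype_card, Fintype.card_subtype]
    rw [show Finset.filter Cond Finset.univ = (Finset.univ : Finset (Fin 0 ⊕ Fin 0 → V r)) from
      Finset.filter_true_of_mem fun u _ => this u]
    simp
  | succ k ih =>
    rw [Nat.card_congr (stepEquiv r k), Nat.card_eq_fintype_card, Fintype.card_sigma]
    have hfib : ∀ u : {u : Fin k ⊕ Fin k → V r // Cond u},
        Fintype.card {p : V r × V r // (∀ i, symp p.1 (u.1 i) = 0) ∧
            (∀ i, symp p.2 (u.1 i) = 0) ∧ symp p.1 p.2 = 1}
          = (2 ^ (2 * r - 2 * k) - 1) * 2 ^ (2 * r - (2 * k + 1)) := by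
      intro u
      rw [← Nat.card_eq_fintype_card]
      exact card_pairs u.1 u.2
    rw [Finset.sum_congr rfl fun u _ => hfib u, Finset.sum_const, Finset.card_univ,
      ← Nat.card_eq_fintype_card, ih, smul_eq_mul, Finset.prod_range_succ, mul_comm]


theorem card_ordered_symplectic_bases (r : ℕ) (hr : 1 ≤ r) :
    Nat.card {u : (Fin r ⊕ Fin r) → ((Fin r ⊕ Fin r) → ZMod 2) //
        ∀ i j : Fin r ⊕ Fin r, symp (u i) (u j) = Omega r i j}
      = (∏ l ∈ Finset.range r, (2 ^ (2 * r - 2 * l) - 1)) *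
        (∏ m ∈ Finset.range r, 2 ^ (2 * r - (2 * m + 1))) := by
  rw [← Finset.prod_mul_distrib]
  exact key r r
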